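/- The operator H_I, regarded as a densely defined operator on the Hilbert space ℓ²(ℕ, ℂ) with domain the subspace of finitely supported sequences, is essentially self-adjoint: it is a symmetric (densely defined) operator and its adjoint coincides with its closure. -/

import Mathlib

/-- The operator H_I in the spin-network basis: (H_I a) 0 = 0,
(H_I a) 1 = i·(5/4)·a 2, (H_I a) n = i·(n/2 + 3/4)·a(n+1) − i·(n/2 + 1/4)·a(n−1) for n ≥ 2. -/
noncomputable def HI (a : ℕ → ℂ) (n : ℕ) : ℂ :=
  if n = 0 then 0
  else if n = 1 then Complex.I * (5 / 4) * a 2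
  else Complex.I * ((n : ℂ) / 2 + 3 / 4) * a (n + 1) -
        Complex.I * ((n : ℂ) / 2 + 1 / 4) * a (n - 1)

/-- The subspace of ℓ²(ℕ, ℂ) consisting of finitely supported sequences. -/
noncomputable def finSuppSubmodule : Submodule ℂ (lp (fun _ : ℕ => ℂ) 2) where
  carrier := {f : lp (fun _ : ℕ => ℂ) 2 | (Function.support (⇑f : ℕ → ℂ)).Finite}
  zero_mem' := by
    show (Function.support (⇑(0 : lp (fun _ : ℕ => ℂ) 2) : ℕ → ℂ)).Finite
    rw [lp.coeFn_zero]
    simp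
  add_mem' := by
    intro f g hf hg
    show (Function.support (⇑(f + g) : ℕ → ℂ)).Finite
    refine Set.Finite.subset (Set.Finite.union hf hg) ?_
    rw [lp.coeFn_add]
    exact Function.support_add _ _
  smul_mem' := by
    intro c f hf
    show (Function.support (⇑(c • f) : ℕ → ℂ)).Finite
    refine Set.Finite.subset hf ?_
    rw [lp.coeFn_smul]
    exact Function.support_const_smul_subset c ⇑f

namespace HIESA

open Complex Filter Topology Function
open scoped ComplexConjugate

local notation "H2" => lp (fun _ : ℕ => ℂ) 2

lemma mem_finSupp_iff {f : H2} :
    f ∈ finSuppSubmodule ↔ (Function.support (⇑f : ℕ → ℂ)).Finite := Iff.rfl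

lemma HI_add (a b : ℕ → ℂ) (n : ℕ) : HI (a + b) n = HI a n + HI b n := by
  simp only [HI, Pi.add_apply]; split_ifs <;> ring

lemma HI_smul (c : ℂ) (a : ℕ → ℂ) (n : ℕ) : HI (c • a) n = c * HI a n := by
  simp only [HI, Pi.smul_apply, smul_eq_mul]; split_ifs <;> ring

lemma HI_support (a : ℕ → ℂ) :
    support (HI a) ⊆ (fun m => m - 1) '' support a ∪ (fun m => m + 1) '' support a := by
  intro n hn
  simp only [mem_support, HI] at hn
  split_ifs at hn with h0 h1
  · exact absurd rfl hn
  · have h2 : a 2 ≠ 0 := by intro h; apply hn; rw [h]; ring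
    subst h1
    exact Or.inl ⟨2, h2, rfl⟩
  · by_cases hp : a (n + 1) = 0
    · have hm : a (n - 1) ≠ 0 := by intro h; apply hn; rw [h, hp]; ring
      exact Or.inr ⟨n - 1, hm, show n - 1 + 1 = n by omega⟩
    · exact Or.inl ⟨n + 1, hp, show n + 1 - 1 = n by omega⟩

lemma HI_finite_support {a : ℕ → ℂ} (h : (support a).Finite) : (support (HI a)).Finite :=
  (Set.Finite.union (h.image _) (h.image _)).subset (HI_support a)

lemma memℓp_of_finite {f : ℕ → ℂ} (hf : (support f).Finite) : Memℓp f 2 :=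
  (memℓp_zero hf).of_exponent_ge (by norm_num)

/-- The operator T as a LinearPMap. -/
noncomputable def T : H2 →ₗ.[ℂ] H2 where
  domain := finSuppSubmodule
  toFun :=
  { toFun := fun x => ⟨HI (⇑(x : H2)), memℓp_of_finite (HI_finite_support x.2)⟩
    map_add' := by
      intro x y
      apply lp.ext
      funext n
      simp only [lp.coeFn_add, Pi.add_apply]
      show HI (⇑((x : H2) + (y : H2))) n = HI (⇑(x : H2)) n + HI (⇑(y : H2)) n
      rw [lp.coeFn_add]
      exact HI_add _ _ n
    map_smul' := by
      intro c x
      apply lp.ext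
      funext n
      simp only [RingHom.id_apply, lp.coeFn_smul, Pi.smul_apply, smul_eq_mul]
      show HI (⇑(c • (x : H2))) n = c * HI (⇑(x : H2)) n
      rw [lp.coeFn_smul]
      exact HI_smul c _ n }

@[simp] lemma T_domain : T.domain = finSuppSubmodule := rfl

lemma T_apply (x : T.domain) (n : ℕ) : (⇑(T x) : ℕ → ℂ) n = HI (⇑(x : H2)) n := rfl

/-- pointwise delta function -/
noncomputable def dd (m : ℕ) (c : ℂ) : ℕ → ℂ := fun j => if j = m then c else 0

lemma sing_apply (m : ℕ) (c : ℂ) (j : ℕ) : (lp.single 2 m c : H2) j = dd m c j := by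
  rw [lp.single_apply, dd]
  split_ifs with h
  · subst h; simp
  · simp [h]

lemma sing_coe (m : ℕ) (c : ℂ) : (⇑(lp.single 2 m c : H2) : ℕ → ℂ) = dd m c :=
  funext (sing_apply m c)

lemma sing_mem (m : ℕ) (c : ℂ) : (lp.single 2 m c : H2) ∈ finSuppSubmodule := by
  rw [mem_finSupp_iff]
  apply (Set.finite_singleton m).subset
  intro j hj
  rw [mem_support, sing_apply, dd] at hj
  by_contra h
  simp only [Set.mem_singleton_iff] at h
  rw [if_neg h] at hj
  exact hj rfl

/-- The key computation: the pairing of `HI` applied to a delta with any sequence. -/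
lemma key_tsum (m : ℕ) (c : ℂ) (y : ℕ → ℂ) :
    ∑' n, conj (HI (dd m c) n) * y n = conj c * HI y m := by
  have hvanish : ∀ n ∉ ({m - 1, m + 1} : Finset ℕ), conj (HI (dd m c) n) * y n = 0 := by
    intro n hn
    simp only [Finset.mem_insert, Finset.mem_singleton] at hn
    push_neg at hn
    have h1 : HI (dd m c) n = 0 := by
      simp only [HI, dd]
      split_ifs with h0 h1 h2 h3 h4 <;> first | rfl | omega | ring
    rw [h1, map_zero, zero_mul]
  rw [tsum_eq_sum hvanish]
  rcases Nat.lt_or_ge m 2 with hm | hm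
  · interval_cases m
    · -- m = 0
      norm_num [HI, dd]
    · -- m = 1
      norm_num [HI, dd, Finset.sum_pair, map_mul, map_div₀, map_ofNat, Complex.conj_I]
      ring
  · have hne : m - 1 ≠ m + 1 := by omega
    rw [Finset.sum_pair hne]
    have hm1 : (2:ℕ) ≤ m + 1 := by omega
    have e1 : HI (dd m c) (m - 1) = Complex.I * ((m : ℂ) / 2 + 1 / 4) * c := by
      rcases eq_or_lt_of_le hm with h2 | h3
    -- m = 2 : n = 1 case
      · rw [← h2]
        norm_num [HI, dd]
      · have hn0 : ¬(m - 1 = 0) := by omega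
        have hn1 : ¬(m - 1 = 1) := by omega
        rw [HI, if_neg hn0, if_neg hn1]
        simp only [dd]
        rw [if_pos (by omega : m - 1 + 1 = m), if_neg (by omega : ¬(m - 1 - 1 = m))]
        have : ((m - 1 : ℕ) : ℂ) = (m : ℂ) - 1 := by
          push_cast [Nat.cast_sub (by omega : 1 ≤ m)]; ring
        rw [this]; ring
    have e2 : HI (dd m c) (m + 1) = - (Complex.I * ((m : ℂ) / 2 + 3 / 4) * c) := by
      have hn0 : ¬(m + 1 = 0) := by omega
      have hn1 : ¬(m + 1 = 1) := by omega
      rw [HI, if_neg hn0, if_neg hn1]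
      simp only [dd]
      rw [if_neg (by omega : ¬(m + 1 + 1 = m)), if_pos (by omega : m + 1 - 1 = m)]
      push_cast
      ring
    have e3 : HI y m = Complex.I * ((m : ℂ) / 2 + 3 / 4) * y (m + 1) -
        Complex.I * ((m : ℂ) / 2 + 1 / 4) * y (m - 1) := by
      rw [HI, if_neg (by omega : ¬(m = 0)), if_neg (by omega : ¬(m = 1))]
    rw [e1, e2, e3]
    simp only [map_mul, map_neg, Complex.conj_I, map_div₀, map_add, map_ofNat, map_one,
      Complex.conj_natCast]
    push_cast
    ring

lemma inner_eq (f g : H2) : (inner ℂ f g : ℂ) = ∑' n, conj (f n) * g n := by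
  rw [lp.inner_eq_tsum]; exact tsum_congr fun n => RCLike.inner_apply' _ _

/-- Inner product of T applied to a single with anything. -/
lemma inner_T_single (m : ℕ) (c : ℂ) (y : H2) :
    (inner ℂ (T ⟨lp.single 2 m c, sing_mem m c⟩) y : ℂ) = conj c * HI (⇑y) m := by
  rw [inner_eq]
  have : ∀ n, conj ((⇑(T ⟨lp.single 2 m c, sing_mem m c⟩) : ℕ → ℂ) n) * y n
      = conj (HI (dd m c) n) * y n := by
    intro n
    rw [T_apply]
    congr 2
    exact congrFun (congrArg HI (sing_coe m c)) n
  rw [tsum_congr this, key_tsum]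

/-- every finitely supported lp element is a finite sum of singles -/
lemma eq_sum_single (x : H2) (hx : x ∈ finSuppSubmodule) :
    x = ∑ i ∈ (mem_finSupp_iff.1 hx).toFinset, lp.single 2 i (x i) := by
  apply lp.ext
  funext n
  rw [lp.coeFn_sum]
  simp only [Finset.sum_apply]
  rw [Finset.sum_congr rfl (fun i _ => sing_apply i (x i) n)]
  simp only [dd]
  rw [Finset.sum_ite_eq (mem_finSupp_iff.1 hx).toFinset n (fun i => x i)]
  split_ifs with h
  · rfl
  · rw [Set.Finite.mem_toFinset, mem_support, not_not] at h
    exact h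

lemma T_symmetric (x y : T.domain) :
    (inner ℂ (T x) ((y : H2)) : ℂ) = inner ℂ ((x : H2)) (T y) := by
  obtain ⟨x, hx⟩ := x
  set s := (mem_finSupp_iff.1 hx).toFinset with hs
  have hxd : (⟨x, hx⟩ : T.domain) = ∑ i ∈ s, ⟨lp.single 2 i (x i), sing_mem i (x i)⟩ := by
    apply Subtype.ext
    have h1 := eq_sum_single x hx
    rw [Submodule.coe_sum]; exact h1
  have hTsum : T (∑ i ∈ s, (⟨lp.single 2 i (x i), sing_mem i (x i)⟩ : T.domain))
      = ∑ i ∈ s, T ⟨lp.single 2 i (x i), sing_mem i (x i)⟩ := map_sum T.toFun _ s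
  rw [hxd, hTsum]
  rw [show ((∑ i ∈ s, (⟨lp.single 2 i (x i), sing_mem i (x i)⟩ : T.domain) : T.domain) : H2)
      = ∑ i ∈ s, (lp.single 2 i (x i) : H2) by rw [Submodule.coe_sum]]
  rw [sum_inner, sum_inner]
  refine Finset.sum_congr rfl fun i _ => ?_
  rw [inner_T_single, lp.inner_single_left]
  rw [RCLike.inner_apply']; rfl

lemma T_dense : Dense (T.domain : Set H2) := by
  intro f
  refine mem_closure_of_tendsto (lp.hasSum_single (by norm_num) f) ?_
  filter_upwards with s
  exact Submodule.sum_mem _ fun i _ => sing_mem i (f i)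


open scoped ENNReal

lemma two_toReal : ((2 : ℝ≥0∞)).toReal = ((2 : ℕ) : ℝ) := by norm_num

lemma summable_sq (f : H2) : Summable (fun n => ‖(⇑f : ℕ → ℂ) n‖ ^ 2) := by
  have h := (lp.memℓp f).summable (by norm_num : 0 < (2 : ℝ≥0∞).toReal)
  refine h.congr fun n => ?_
  rw [two_toReal, Real.rpow_natCast]

lemma norm_sq_eq (f : H2) : ‖f‖ ^ 2 = ∑' n, ‖(⇑f : ℕ → ℂ) n‖ ^ 2 := by
  have h := lp.norm_rpow_eq_tsum (p := 2) (by norm_num) f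
  rw [two_toReal, Real.rpow_natCast] at h
  rw [h]
  exact tsum_congr fun n => by rw [Real.rpow_natCast]

lemma norm_le_sqrt (f : H2) (b : ℕ → ℝ) (hb : Summable b)
    (h : ∀ n, ‖(⇑f : ℕ → ℂ) n‖ ^ 2 ≤ b n) : ‖f‖ ≤ Real.sqrt (∑' n, b n) := by
  have h1 : ‖f‖ ^ 2 ≤ ∑' n, b n := by
    rw [norm_sq_eq]
    exact Summable.tsum_le_tsum h (summable_sq f) hb
  have h2 : ‖f‖ = Real.sqrt (‖f‖ ^ 2) := (Real.sqrt_sq (norm_nonneg f)).symm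
  rw [h2]
  exact Real.sqrt_le_sqrt h1

/-- tail sums of a sequence tend to zero -/
lemma tail_tendsto_zero (q : ℕ → ℝ) :
    Tendsto (fun N => ∑' n, if N ≤ n then q n else 0) atTop (𝓝 0) := by
  have he : ∀ N : ℕ, (∑' n, if N ≤ n then q n else 0) = ∑' k, q (k + N) := by
    intro N
    have hs : Function.support (fun n => if N ≤ n then q n else 0)
        ⊆ Set.range (fun k => k + N) := by
      intro n hn
      rw [mem_support] at hn
      by_cases h : N ≤ n
      · exact ⟨n - N, show n - N + N = n by omega⟩
      · exact absurd (if_neg h) hn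
    calc (∑' n, if N ≤ n then q n else 0)
        = ∑' k, (if N ≤ k + N then q (k + N) else 0) :=
          (Function.Injective.tsum_eq (add_left_injective N) hs).symm
      _ = ∑' k, q (k + N) := tsum_congr fun k => if_pos (Nat.le_add_left N k)
  simp only [he]
  exact tendsto_sum_nat_add q

/-- the natural-number cutoff numerator -/
def gg (N n : ℕ) : ℕ := 2 * N - min (2 * N) (max n N)

/-- the cutoff function -/
noncomputable def ψ (N n : ℕ) : ℝ := (gg N n : ℝ) / N

lemma ψ_nonneg (N n : ℕ) : 0 ≤ ψ N n := div_nonneg (Nat.cast_nonneg _) (Nat.cast_nonneg _)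

lemma ψ_le_one {N : ℕ} (hN : 1 ≤ N) (n : ℕ) : ψ N n ≤ 1 := by
  have hN' : (0:ℝ) < N := Nat.cast_pos.mpr hN
  rw [ψ, div_le_one hN']
  have : gg N n ≤ N := by rw [gg]; omega
  exact_mod_cast this

lemma ψ_eq_one {N n : ℕ} (hN : 1 ≤ N) (h : n ≤ N) : ψ N n = 1 := by
  have hN' : (0:ℝ) < N := Nat.cast_pos.mpr hN
  have hg : gg N n = N := by rw [gg]; omega
  rw [ψ, hg, div_self hN'.ne']

lemma ψ_eq_zero {N n : ℕ} (h : 2 * N ≤ n) : ψ N n = 0 := by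
  have : gg N n = 0 := by rw [gg]; omega
  rw [ψ, this]; simp

lemma ψ_adj_eq {N a b : ℕ} (h : (a ≤ N ∧ b ≤ N) ∨ (2 * N ≤ a ∧ 2 * N ≤ b)) :
    ψ N a = ψ N b := by
  have : gg N a = gg N b := by rw [gg, gg]; omega
  rw [ψ, ψ, this]

lemma ψ_adj_diff {N a b : ℕ} (hN : 1 ≤ N) (h1 : a ≤ b + 1) (h2 : b ≤ a + 1) :
    |ψ N a - ψ N b| ≤ 1 / N := by
  have hN' : (0:ℝ) < N := Nat.cast_pos.mpr hN
  have hg : gg N a ≤ gg N b + 1 ∧ gg N b ≤ gg N a + 1 := by rw [gg, gg]; omega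
  have c1 : (gg N a : ℝ) ≤ (gg N b : ℝ) + 1 := by exact_mod_cast hg.1
  have c2 : (gg N b : ℝ) ≤ (gg N a : ℝ) + 1 := by exact_mod_cast hg.2
  rw [ψ, ψ, div_sub_div_same, abs_div, _root_.abs_of_nonneg hN'.le]
  have hnum : |(gg N a : ℝ) - gg N b| ≤ 1 := abs_le.2 ⟨by linarith, by linarith⟩
  gcongr

noncomputable def wfun (y : H2) (N : ℕ) : ℕ → ℂ := fun n => ((ψ N n : ℝ) : ℂ) * (⇑y) n

lemma wfun_supp (y : H2) (N : ℕ) : (support (wfun y N)).Finite := by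
  apply (Set.finite_Iio (2 * N)).subset
  intro n hn
  rw [mem_support] at hn
  by_contra h
  simp only [Set.mem_Iio, not_lt] at h
  rw [wfun, ψ_eq_zero h] at hn
  simp at hn

noncomputable def wel (y : H2) (N : ℕ) : H2 := ⟨wfun y N, memℓp_of_finite (wfun_supp y N)⟩

lemma wel_mem (y : H2) (N : ℕ) : wel y N ∈ finSuppSubmodule := wfun_supp y N

lemma summable_tail (q : ℕ → ℝ) (hq : Summable q) (h0 : ∀ n, 0 ≤ q n) (N : ℕ) :
    Summable (fun n => if N ≤ n then q n else 0) := by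
  refine Summable.of_nonneg_of_le (fun n => ?_) (fun n => ?_) hq
  · split_ifs; exacts [h0 n, le_rfl]
  · split_ifs; exacts [le_rfl, h0 n]

lemma norm_psi_sub_one_le {N n : ℕ} (hN : 1 ≤ N) : ‖((ψ N n : ℝ) : ℂ) - 1‖ ≤ 1 := by
  rw [show ((ψ N n : ℝ) : ℂ) - 1 = ((ψ N n - 1 : ℝ) : ℂ) by push_cast; ring]
  rw [Complex.norm_real, Real.norm_eq_abs, abs_le]
  constructor
  · linarith [ψ_nonneg N n]
  · linarith [ψ_le_one hN n]

lemma bound1 {N : ℕ} (hN : 1 ≤ N) (y : H2) (n : ℕ) :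
    ‖(⇑(wel y N - y) : ℕ → ℂ) n‖ ^ 2 ≤ (if N ≤ n then ‖(⇑y : ℕ → ℂ) n‖ ^ 2 else 0) := by
  have hc : (⇑(wel y N - y) : ℕ → ℂ) n = (((ψ N n : ℝ) : ℂ) - 1) * (⇑y) n := by
    rw [lp.coeFn_sub]
    show wfun y N n - (⇑y) n = _
    rw [wfun]; ring
  rw [hc]
  split_ifs with h
  · rw [norm_mul, mul_pow]
    have h1 := norm_psi_sub_one_le (n := n) hN
    have h2 : ‖((ψ N n : ℝ) : ℂ) - 1‖ ^ 2 ≤ 1 := by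
      nlinarith [norm_nonneg (((ψ N n : ℝ) : ℂ) - 1)]
    calc ‖((ψ N n : ℝ) : ℂ) - 1‖ ^ 2 * ‖(⇑y : ℕ → ℂ) n‖ ^ 2
        ≤ 1 * ‖(⇑y : ℕ → ℂ) n‖ ^ 2 := mul_le_mul_of_nonneg_right h2 (sq_nonneg _)
      _ = ‖(⇑y : ℕ → ℂ) n‖ ^ 2 := one_mul _
  · have h1 : ψ N n = 1 := ψ_eq_one hN (by omega)
    rw [h1]
    norm_num

lemma norm_Irdw (r d : ℝ) (w : ℂ) :
    ‖Complex.I * (r : ℂ) * ((d : ℝ) : ℂ) * w‖ = |r| * |d| * ‖w‖ := by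
  rw [norm_mul, norm_mul, norm_mul, Complex.norm_I, Complex.norm_real, Complex.norm_real,
    Real.norm_eq_abs, Real.norm_eq_abs, one_mul]

/-- Claim A : commutator bound -/
lemma claimA {N : ℕ} (hN : 1 ≤ N) (y : H2) (n : ℕ) :
    ‖HI (wfun y N) n - ((ψ N n : ℝ) : ℂ) * HI (⇑y) n‖ ≤
      3 * (if N ≤ n + 1 then ‖(⇑y : ℕ → ℂ) (n + 1)‖ else 0) +
      3 * (if N ≤ n - 1 then ‖(⇑y : ℕ → ℂ) (n - 1)‖ else 0) := by
  set t1 := if N ≤ n + 1 then ‖(⇑y : ℕ → ℂ) (n + 1)‖ else 0 with ht1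
  set t2 := if N ≤ n - 1 then ‖(⇑y : ℕ → ℂ) (n - 1)‖ else 0 with ht2
  have ht1n : 0 ≤ t1 := by rw [ht1]; split_ifs; exacts [norm_nonneg _, le_rfl]
  have ht2n : 0 ≤ t2 := by rw [ht2]; split_ifs; exacts [norm_nonneg _, le_rfl]
  have hN' : (0:ℝ) < N := Nat.cast_pos.mpr hN
  rcases Nat.lt_or_ge n 2 with hn | hn
  · interval_cases n
    · -- n = 0
      simp only [HI, if_pos rfl]
      simpa using by positivity
    · -- n = 1
      have e : HI (wfun y N) 1 - ((ψ N 1 : ℝ) : ℂ) * HI (⇑y) 1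
          = Complex.I * ((5/4 : ℝ) : ℂ) * ((ψ N 2 - ψ N 1 : ℝ) : ℂ) * (⇑y) 2 := by
        simp only [HI, if_neg (one_ne_zero), if_pos rfl, wfun]
        push_cast
        ring
      rw [e, norm_Irdw]
      by_cases hc : 2 ≤ N
      · rw [ψ_eq_one hN (by omega : 2 ≤ N), ψ_eq_one hN (by omega : 1 ≤ N)]
        simpa using by positivity
      · -- N = 1
        have hN1 : N = 1 := by omega
        have hd : |ψ N 2 - ψ N 1| ≤ 1 / N := ψ_adj_diff hN (by omega) (by omega)
        have h1 : t1 = ‖(⇑y : ℕ → ℂ) 2‖ := by rw [ht1]; rw [if_pos (by omega)]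
        have hb : |(5/4 : ℝ)| * |ψ N 2 - ψ N 1| ≤ 3 := by
          rw [_root_.abs_of_nonneg (by norm_num : (0:ℝ) ≤ 5/4)]
          have : (1:ℝ) / N = 1 := by rw [hN1]; norm_num
          nlinarith [abs_nonneg (ψ N 2 - ψ N 1)]
        calc |(5/4 : ℝ)| * |ψ N 2 - ψ N 1| * ‖(⇑y : ℕ → ℂ) 2‖
            ≤ 3 * ‖(⇑y : ℕ → ℂ) 2‖ := by
              apply mul_le_mul_of_nonneg_right hb (norm_nonneg _)
          _ ≤ 3 * t1 + 3 * t2 := by rw [h1]; nlinarith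
  · -- n ≥ 2
    have hn0 : ¬(n = 0) := by omega
    have hn1 : ¬(n = 1) := by omega
    have e : HI (wfun y N) n - ((ψ N n : ℝ) : ℂ) * HI (⇑y) n
        = Complex.I * (((n:ℝ)/2 + 3/4 : ℝ) : ℂ) * ((ψ N (n+1) - ψ N n : ℝ) : ℂ) * (⇑y) (n+1)
        - Complex.I * (((n:ℝ)/2 + 1/4 : ℝ) : ℂ) * ((ψ N (n-1) - ψ N n : ℝ) : ℂ) * (⇑y) (n-1) := by
      simp only [HI, if_neg hn0, if_neg hn1, wfun]
      push_cast
      ring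
    rw [e]
    refine le_trans (norm_sub_le _ _) ?_
    rw [norm_Irdw, norm_Irdw]
    have hterm1 : |(n:ℝ)/2 + 3/4| * |ψ N (n+1) - ψ N n| * ‖(⇑y : ℕ → ℂ) (n+1)‖ ≤ 3 * t1 := by
      by_cases hc : (n + 1 ≤ N ∧ n ≤ N) ∨ (2 * N ≤ n + 1 ∧ 2 * N ≤ n)
      · rw [ψ_adj_eq hc, sub_self, abs_zero, mul_zero, zero_mul]
        positivity
      · have hrange : N ≤ n ∧ n ≤ 2 * N - 1 := by omega
        have hub : n ≤ 2 * N - 1 := hrange.2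
        have hd : |ψ N (n+1) - ψ N n| ≤ 1 / N := ψ_adj_diff hN (by omega) (by omega)
        have h1 : t1 = ‖(⇑y : ℕ → ℂ) (n+1)‖ := by rw [ht1, if_pos (by omega)]
        have hcast : (n:ℝ) ≤ 2 * N - 1 := by
          have : (n:ℝ) ≤ ((2 * N - 1 : ℕ) : ℝ) := Nat.cast_le.mpr hub
          have h2 : ((2 * N - 1 : ℕ) : ℝ) = 2 * (N:ℝ) - 1 := by
            push_cast [Nat.cast_sub (by omega : 1 ≤ 2 * N)]; ring
          linarith [h2 ▸ this]
        have hb : |(n:ℝ)/2 + 3/4| * |ψ N (n+1) - ψ N n| ≤ 3 := by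
          rw [_root_.abs_of_nonneg (by positivity : (0:ℝ) ≤ (n:ℝ)/2 + 3/4)]
          have hcoef : (n:ℝ)/2 + 3/4 ≤ 3 * N := by linarith
          have habs : 0 ≤ |ψ N (n+1) - ψ N n| := abs_nonneg _
          calc ((n:ℝ)/2 + 3/4) * |ψ N (n+1) - ψ N n| ≤ (3 * N) * (1 / N) := by
                apply mul_le_mul hcoef hd habs (by positivity)
            _ = 3 := by field_simp
        rw [h1]
        exact mul_le_mul_of_nonneg_right hb (norm_nonneg _)
    have hterm2 : |(n:ℝ)/2 + 1/4| * |ψ N (n-1) - ψ N n| * ‖(⇑y : ℕ → ℂ) (n-1)‖ ≤ 3 * t2 := by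
      by_cases hc : (n - 1 ≤ N ∧ n ≤ N) ∨ (2 * N ≤ n - 1 ∧ 2 * N ≤ n)
      · rw [ψ_adj_eq hc, sub_self, abs_zero, mul_zero, zero_mul]
        positivity
      · have hrange : N ≤ n - 1 ∧ n ≤ 2 * N := by omega
        have hd : |ψ N (n-1) - ψ N n| ≤ 1 / N := ψ_adj_diff hN (by omega) (by omega)
        have h1 : t2 = ‖(⇑y : ℕ → ℂ) (n-1)‖ := by rw [ht2, if_pos (by omega)]
        have hcast : (n:ℝ) ≤ 2 * N := by exact_mod_cast hrange.2
        have hN1 : (1:ℝ) ≤ N := Nat.one_le_cast.mpr hN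
        have hb : |(n:ℝ)/2 + 1/4| * |ψ N (n-1) - ψ N n| ≤ 3 := by
          rw [_root_.abs_of_nonneg (by positivity : (0:ℝ) ≤ (n:ℝ)/2 + 1/4)]
          have hcoef : (n:ℝ)/2 + 1/4 ≤ 3 * N := by linarith
          have habs : 0 ≤ |ψ N (n-1) - ψ N n| := abs_nonneg _
          calc ((n:ℝ)/2 + 1/4) * |ψ N (n-1) - ψ N n| ≤ (3 * N) * (1 / N) := by
                apply mul_le_mul hcoef hd habs (by positivity)
            _ = 3 := by field_simp
        rw [h1]
        exact mul_le_mul_of_nonneg_right hb (norm_nonneg _)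
    linarith

lemma claimB {N : ℕ} (hN : 1 ≤ N) (y z : H2) (hz : ∀ m, (⇑z : ℕ → ℂ) m = HI (⇑y) m) (n : ℕ) :
    ‖((ψ N n : ℝ) : ℂ) * HI (⇑y) n - (⇑z : ℕ → ℂ) n‖ ≤
      (if N ≤ n then ‖(⇑z : ℕ → ℂ) n‖ else 0) := by
  rw [hz n]
  have e : ((ψ N n : ℝ) : ℂ) * HI (⇑y) n - HI (⇑y) n
      = (((ψ N n : ℝ) : ℂ) - 1) * HI (⇑y) n := by ring
  rw [e, norm_mul]
  split_ifs with h
  · rw [← hz n]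
    calc ‖((ψ N n : ℝ) : ℂ) - 1‖ * ‖(⇑z : ℕ → ℂ) n‖
        ≤ 1 * ‖(⇑z : ℕ → ℂ) n‖ :=
          mul_le_mul_of_nonneg_right (norm_psi_sub_one_le hN) (norm_nonneg _)
      _ = ‖(⇑z : ℕ → ℂ) n‖ := one_mul _
  · have h1 : ψ N n = 1 := ψ_eq_one hN (by omega)
    rw [h1]
    norm_num

lemma bound2 {N : ℕ} (hN : 1 ≤ N) (y z : H2) (hz : ∀ m, (⇑z : ℕ → ℂ) m = HI (⇑y) m) (n : ℕ) :
    ‖HI (wfun y N) n - (⇑z : ℕ → ℂ) n‖ ^ 2 ≤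
      36 * (if N ≤ n + 1 then ‖(⇑y : ℕ → ℂ) (n + 1)‖ ^ 2 else 0) +
      36 * (if N ≤ n - 1 then ‖(⇑y : ℕ → ℂ) (n - 1)‖ ^ 2 else 0) +
      2 * (if N ≤ n then ‖(⇑z : ℕ → ℂ) n‖ ^ 2 else 0) := by
  set t1 := if N ≤ n + 1 then ‖(⇑y : ℕ → ℂ) (n + 1)‖ else 0 with ht1
  set t2 := if N ≤ n - 1 then ‖(⇑y : ℕ → ℂ) (n - 1)‖ else 0 with ht2
  set s0 := if N ≤ n then ‖(⇑z : ℕ → ℂ) n‖ else 0 with hs0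
  have ht1n : 0 ≤ t1 := by rw [ht1]; split_ifs; exacts [norm_nonneg _, le_rfl]
  have ht2n : 0 ≤ t2 := by rw [ht2]; split_ifs; exacts [norm_nonneg _, le_rfl]
  have hs0n : 0 ≤ s0 := by rw [hs0]; split_ifs; exacts [norm_nonneg _, le_rfl]
  have e1 : (if N ≤ n + 1 then ‖(⇑y : ℕ → ℂ) (n + 1)‖ ^ 2 else 0) = t1 ^ 2 := by
    rw [ht1]; split_ifs <;> simp
  have e2 : (if N ≤ n - 1 then ‖(⇑y : ℕ → ℂ) (n - 1)‖ ^ 2 else 0) = t2 ^ 2 := by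
    rw [ht2]; split_ifs <;> simp
  have e3 : (if N ≤ n then ‖(⇑z : ℕ → ℂ) n‖ ^ 2 else 0) = s0 ^ 2 := by
    rw [hs0]; split_ifs <;> simp
  rw [e1, e2, e3]
  have htri : ‖HI (wfun y N) n - (⇑z : ℕ → ℂ) n‖ ≤ 3 * t1 + 3 * t2 + s0 := by
    have hsplit : HI (wfun y N) n - (⇑z : ℕ → ℂ) n
        = (HI (wfun y N) n - ((ψ N n : ℝ) : ℂ) * HI (⇑y) n)
          + (((ψ N n : ℝ) : ℂ) * HI (⇑y) n - (⇑z : ℕ → ℂ) n) := by ring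
    rw [hsplit]
    refine le_trans (norm_add_le _ _) ?_
    have hA := claimA hN y n
    have hB := claimB hN y z hz n
    rw [← ht1, ← ht2] at hA
    rw [← hs0] at hB
    linarith
  have hsq : ‖HI (wfun y N) n - (⇑z : ℕ → ℂ) n‖ ^ 2 ≤ (3 * t1 + 3 * t2 + s0) ^ 2 :=
    pow_le_pow_left₀ (norm_nonneg _) htri 2
  nlinarith [sq_nonneg (t1 - t2), sq_nonneg (6 * t1 - s0), sq_nonneg (6 * t2 - s0)]

/-- first convergence: the cutoffs tend to y -/
lemma conv1 (y : H2) : Tendsto (fun N => wel y (N + 1)) atTop (𝓝 y) := by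
  rw [tendsto_iff_norm_sub_tendsto_zero]
  have hq : Summable (fun n => ‖(⇑y : ℕ → ℂ) n‖ ^ 2) := summable_sq y
  have hb : ∀ N : ℕ, ‖wel y (N + 1) - y‖
      ≤ Real.sqrt (∑' n, if N + 1 ≤ n then ‖(⇑y : ℕ → ℂ) n‖ ^ 2 else 0) := by
    intro N
    exact norm_le_sqrt _ _ (summable_tail _ hq (fun n => sq_nonneg _) (N + 1))
      (bound1 (by omega) y)
  refine squeeze_zero (fun N => norm_nonneg _) hb ?_
  have h0 : Tendsto (fun N => ∑' n, if N ≤ n then ‖(⇑y : ℕ → ℂ) n‖ ^ 2 else 0)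
      atTop (𝓝 0) := tail_tendsto_zero _
  have h1 : Tendsto (fun N : ℕ => ∑' n, if N + 1 ≤ n then ‖(⇑y : ℕ → ℂ) n‖ ^ 2 else 0)
      atTop (𝓝 0) := h0.comp (tendsto_add_atTop_nat 1)
  have := (Real.continuous_sqrt.tendsto' 0 0 Real.sqrt_zero).comp h1
  simpa [Function.comp_def] using this

/-- second convergence: T applied to the cutoffs tends to z -/
lemma conv2 (y z : H2) (hz : ∀ m, (⇑z : ℕ → ℂ) m = HI (⇑y) m) :
    Tendsto (fun N => (T ⟨wel y (N + 1), wel_mem y (N + 1)⟩ : H2)) atTop (𝓝 z) := by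
  rw [tendsto_iff_norm_sub_tendsto_zero]
  have hqy : Summable (fun n => ‖(⇑y : ℕ → ℂ) n‖ ^ 2) := summable_sq y
  have hqz : Summable (fun n => ‖(⇑z : ℕ → ℂ) n‖ ^ 2) := summable_sq z
  -- summability of the bounding function
  have hsum : ∀ N : ℕ, 1 ≤ N → Summable (fun n =>
      36 * (if N ≤ n + 1 then ‖(⇑y : ℕ → ℂ) (n + 1)‖ ^ 2 else 0) +
      36 * (if N ≤ n - 1 then ‖(⇑y : ℕ → ℂ) (n - 1)‖ ^ 2 else 0) +
      2 * (if N ≤ n then ‖(⇑z : ℕ → ℂ) n‖ ^ 2 else 0)) := by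
    intro N hN
    have hty := summable_tail _ hqy (fun n => sq_nonneg _) N
    have htz := summable_tail _ hqz (fun n => sq_nonneg _) N
    have h1 : Summable (fun n : ℕ => if N ≤ n + 1 then ‖(⇑y : ℕ → ℂ) (n + 1)‖ ^ 2 else 0) :=
      hty.comp_injective (add_left_injective 1)
    have h2 : Summable (fun n : ℕ => if N ≤ n - 1 then ‖(⇑y : ℕ → ℂ) (n - 1)‖ ^ 2 else 0) := by
      apply (summable_nat_add_iff 1).1
      simpa using hty
    exact ((h1.mul_left 36).add (h2.mul_left 36)).add (htz.mul_left 2)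
  -- tsum bounds
  have htsum : ∀ N : ℕ, 1 ≤ N → (∑' n,
      (36 * (if N ≤ n + 1 then ‖(⇑y : ℕ → ℂ) (n + 1)‖ ^ 2 else 0) +
      36 * (if N ≤ n - 1 then ‖(⇑y : ℕ → ℂ) (n - 1)‖ ^ 2 else 0) +
      2 * (if N ≤ n then ‖(⇑z : ℕ → ℂ) n‖ ^ 2 else 0)))
      ≤ 72 * (∑' n, if N ≤ n then ‖(⇑y : ℕ → ℂ) n‖ ^ 2 else 0)
        + 2 * (∑' n, if N ≤ n then ‖(⇑z : ℕ → ℂ) n‖ ^ 2 else 0) := by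
    intro N hN
    have hty := summable_tail _ hqy (fun n => sq_nonneg _) N
    have htz := summable_tail _ hqz (fun n => sq_nonneg _) N
    have h1 : Summable (fun n : ℕ => if N ≤ n + 1 then ‖(⇑y : ℕ → ℂ) (n + 1)‖ ^ 2 else 0) :=
      hty.comp_injective (add_left_injective 1)
    have h2 : Summable (fun n : ℕ => if N ≤ n - 1 then ‖(⇑y : ℕ → ℂ) (n - 1)‖ ^ 2 else 0) := by
      apply (summable_nat_add_iff 1).1
      simpa using hty
    have e1 : (∑' n : ℕ, if N ≤ n + 1 then ‖(⇑y : ℕ → ℂ) (n + 1)‖ ^ 2 else 0)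
        ≤ ∑' n, if N ≤ n then ‖(⇑y : ℕ → ℂ) n‖ ^ 2 else 0 := by
      apply Summable.tsum_le_tsum_of_inj (fun n => n + 1) (add_left_injective 1)
      · intro c _
        split_ifs; exacts [sq_nonneg _, le_rfl]
      · intro n; exact le_rfl
      · exact h1
      · exact hty
    have e2 : (∑' n : ℕ, if N ≤ n - 1 then ‖(⇑y : ℕ → ℂ) (n - 1)‖ ^ 2 else 0)
        ≤ ∑' n, if N ≤ n then ‖(⇑y : ℕ → ℂ) n‖ ^ 2 else 0 := by
      rw [Summable.tsum_eq_zero_add h2]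
      have hz0 : (if N ≤ 0 - 1 then ‖(⇑y : ℕ → ℂ) (0 - 1)‖ ^ 2 else 0) = 0 := by
        rw [if_neg (by omega)]
      rw [hz0, zero_add]
      apply le_of_eq
      exact tsum_congr fun n => by rw [Nat.add_sub_cancel]
    calc (∑' n, (36 * (if N ≤ n + 1 then ‖(⇑y : ℕ → ℂ) (n + 1)‖ ^ 2 else 0) +
      36 * (if N ≤ n - 1 then ‖(⇑y : ℕ → ℂ) (n - 1)‖ ^ 2 else 0) +
      2 * (if N ≤ n then ‖(⇑z : ℕ → ℂ) n‖ ^ 2 else 0)))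
        = 36 * (∑' n : ℕ, if N ≤ n + 1 then ‖(⇑y : ℕ → ℂ) (n + 1)‖ ^ 2 else 0)
          + 36 * (∑' n : ℕ, if N ≤ n - 1 then ‖(⇑y : ℕ → ℂ) (n - 1)‖ ^ 2 else 0)
          + 2 * (∑' n, if N ≤ n then ‖(⇑z : ℕ → ℂ) n‖ ^ 2 else 0) := by
          rw [Summable.tsum_add ((h1.mul_left 36).add (h2.mul_left 36)) (htz.mul_left 2),
            Summable.tsum_add (h1.mul_left 36) (h2.mul_left 36), tsum_mul_left, tsum_mul_left,
            tsum_mul_left]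
      _ ≤ _ := by nlinarith [e1, e2]
  -- the pointwise bound
  have hb : ∀ N : ℕ, ‖(T ⟨wel y (N + 1), wel_mem y (N + 1)⟩ : H2) - z‖
      ≤ Real.sqrt (72 * (∑' n, if N + 1 ≤ n then ‖(⇑y : ℕ → ℂ) n‖ ^ 2 else 0)
        + 2 * (∑' n, if N + 1 ≤ n then ‖(⇑z : ℕ → ℂ) n‖ ^ 2 else 0)) := by
    intro N
    have step1 : ‖(T ⟨wel y (N + 1), wel_mem y (N + 1)⟩ : H2) - z‖
        ≤ Real.sqrt (∑' n,
          (36 * (if N + 1 ≤ n + 1 then ‖(⇑y : ℕ → ℂ) (n + 1)‖ ^ 2 else 0) +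
          36 * (if N + 1 ≤ n - 1 then ‖(⇑y : ℕ → ℂ) (n - 1)‖ ^ 2 else 0) +
          2 * (if N + 1 ≤ n then ‖(⇑z : ℕ → ℂ) n‖ ^ 2 else 0))) := by
      apply norm_le_sqrt _ _ (hsum (N + 1) (by omega))
      intro n
      have hcoe : (⇑((T ⟨wel y (N + 1), wel_mem y (N + 1)⟩ : H2) - z) : ℕ → ℂ) n
          = HI (wfun y (N + 1)) n - (⇑z : ℕ → ℂ) n := by
        rw [lp.coeFn_sub]
        rfl
      rw [hcoe]
      exact bound2 (by omega) y z hz n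
    refine le_trans step1 (Real.sqrt_le_sqrt (htsum (N + 1) (by omega)))
  refine squeeze_zero (fun N => norm_nonneg _) hb ?_
  have h0y : Tendsto (fun N => ∑' n, if N ≤ n then ‖(⇑y : ℕ → ℂ) n‖ ^ 2 else 0)
      atTop (𝓝 0) := tail_tendsto_zero _
  have h0z : Tendsto (fun N => ∑' n, if N ≤ n then ‖(⇑z : ℕ → ℂ) n‖ ^ 2 else 0)
      atTop (𝓝 0) := tail_tendsto_zero _
  have h1 : Tendsto (fun N : ℕ => 72 * (∑' n, if N + 1 ≤ n then ‖(⇑y : ℕ → ℂ) n‖ ^ 2 else 0)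
      + 2 * (∑' n, if N + 1 ≤ n then ‖(⇑z : ℕ → ℂ) n‖ ^ 2 else 0)) atTop (𝓝 0) := by
    have hy' := (h0y.comp (tendsto_add_atTop_nat 1)).const_mul (72 : ℝ)
    have hz' := (h0z.comp (tendsto_add_atTop_nat 1)).const_mul (2 : ℝ)
    simpa using hy'.add hz'
  have := (Real.continuous_sqrt.tendsto' 0 0 Real.sqrt_zero).comp h1
  simpa [Function.comp_def] using this

/-- any maximal-domain pair is in the closure of the graph -/
lemma mem_closure_graph (y z : H2) (hz : ∀ m, (⇑z : ℕ → ℂ) m = HI (⇑y) m) :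
    ((y, z) : H2 × H2) ∈ closure (T.graph : Set (H2 × H2)) := by
  apply mem_closure_of_tendsto ((conv1 y).prodMk_nhds (conv2 y z hz))
  filter_upwards with N
  exact T.mem_graph ⟨wel y (N + 1), wel_mem y (N + 1)⟩

lemma adjoint_coords (hT : Dense (T.domain : Set H2)) (u : T.adjoint.domain) (m : ℕ) :
    (⇑(T.adjoint u) : ℕ → ℂ) m = HI (⇑(u : H2)) m := by
  have hfa := LinearPMap.adjoint_isFormalAdjoint hT u ⟨lp.single 2 m 1, sing_mem m 1⟩
  -- LHS : ⟪T† u, single m 1⟫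
  rw [lp.inner_single_right] at hfa
  have hr : (inner ℂ ((u : H2)) (T ⟨lp.single 2 m 1, sing_mem m 1⟩) : ℂ)
      = conj ((1 : ℂ) * HI (⇑(u : H2)) m) := by
    rw [← inner_conj_symm, inner_T_single]
    norm_num
  rw [hr] at hfa
  rw [one_mul] at hfa
  have hfa' : conj ((⇑(T.adjoint u) : ℕ → ℂ) m) = conj (HI (⇑(u : H2)) m) := by
    simpa [RCLike.inner_apply] using hfa
  exact star_injective hfa'

lemma adjoint_graph_closed (hT : Dense (T.domain : Set H2)) :
    IsClosed (T.adjoint.graph : Set (H2 × H2)) := by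
  have he : (T.adjoint.graph : Set (H2 × H2)) =
      ⋂ (x : T.domain), {p : H2 × H2 | (inner ℂ p.2 ((x : H2)) : ℂ) = inner ℂ p.1 (T x)} := by
    ext p
    simp only [Set.mem_iInter, Set.mem_setOf_eq, SetLike.mem_coe]
    constructor
    · intro hp x
      rcases T.adjoint.mem_graph_iff.1 hp with ⟨u, hu1, hu2⟩
      rw [← hu1, ← hu2]
      exact LinearPMap.adjoint_isFormalAdjoint hT u x
    · intro hp
      have hmem : p.1 ∈ T.adjoint.domain :=
        LinearPMap.mem_adjoint_domain_of_exists _ ⟨p.2, fun x => hp x⟩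
      have happ : T.adjoint ⟨p.1, hmem⟩ = p.2 :=
        LinearPMap.adjoint_apply_eq hT _ (fun x => hp x)
      exact T.adjoint.mem_graph_iff.2 ⟨⟨p.1, hmem⟩, rfl, happ⟩
  rw [he]
  refine isClosed_iInter fun x => isClosed_eq ?_ ?_
  · exact Continuous.inner continuous_snd continuous_const
  · exact Continuous.inner continuous_fst continuous_const

lemma adjoint_eq_closure : T.adjoint = T.closure := by
  have hT : Dense (T.domain : Set H2) := T_dense
  have hsym : T.IsFormalAdjoint T := fun x y => T_symmetric x y
  have hTle : T ≤ T.adjoint := hsym.le_adjoint hT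
  have hclosable : T.IsClosable :=
    LinearPMap.isClosable_iff_exists_closed_extension.2
      ⟨T.adjoint, adjoint_graph_closed hT, hTle⟩
  have hle1 : T.closure ≤ T.adjoint := by
    apply LinearPMap.le_of_le_graph
    rw [← hclosable.graph_closure_eq_closure_graph]
    exact Submodule.topologicalClosure_minimal _
      (LinearPMap.le_graph_of_le hTle) (adjoint_graph_closed hT)
  have hle2 : T.adjoint ≤ T.closure := by
    apply LinearPMap.le_of_le_graph
    rw [← hclosable.graph_closure_eq_closure_graph]
    intro p hp
    rcases T.adjoint.mem_graph_iff.1 hp with ⟨u, hu1, hu2⟩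
    have hz : ∀ m, (⇑(p.2) : ℕ → ℂ) m = HI (⇑(p.1)) m := by
      intro m
      rw [← hu1, ← hu2]
      exact adjoint_coords hT u m
    have hcl : ((p.1, p.2) : H2 × H2) ∈ closure (T.graph : Set (H2 × H2)) :=
      mem_closure_graph p.1 p.2 hz
    have : p ∈ (T.graph.topologicalClosure : Set (H2 × H2)) := by
      rw [Submodule.topologicalClosure_coe]
      simpa using hcl
    exact this
  exact le_antisymm hle2 hle1

end HIESA

/-- H_I, as a densely defined operator on ℓ²(ℕ, ℂ) with domain the finitely supported
sequences, is essentially self-adjoint: it is a densely defined symmetric operator and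
its adjoint coincides with its closure. -/
theorem HI_essentially_selfAdjoint :
    ∃ T : lp (fun _ : ℕ => ℂ) 2 →ₗ.[ℂ] lp (fun _ : ℕ => ℂ) 2,
      T.domain = finSuppSubmodule ∧
      (∀ x : T.domain, ∀ n : ℕ, (⇑(T x) : ℕ → ℂ) n = HI (⇑(x : lp (fun _ : ℕ => ℂ) 2)) n) ∧
      Dense (T.domain : Set (lp (fun _ : ℕ => ℂ) 2)) ∧
      (∀ x y : T.domain,
        (inner ℂ (T x) ((y : T.domain) : lp (fun _ : ℕ => ℂ) 2) : ℂ) =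
          inner ℂ ((x : T.domain) : lp (fun _ : ℕ => ℂ) 2) (T y)) ∧
      T.adjoint = T.closure :=
  ⟨HIESA.T, rfl, fun x n => rfl, HIESA.T_dense, HIESA.T_symmetric, HIESA.adjoint_eq_closure⟩
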